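/- Proposition 3.1: Suppose P : ℤ^d_{≥0} × [0,∞) → ℝ solves the chemical master equation and there is a function c : [0,∞) → ℝ^d_{>0} such that P(x,t) = ∏_{i=1}^d e^{−c_i(t)} c_i(t)^{x_i}/x_i! for all x ∈ ℤ^d_{≥0} and t ≥ 0. Then c is differentiable and is the solution of the deterministic mass-action ODE c'(t) = Σ_k κ_k c(t)^{y_k} ζ_k with initial condition c(0). -/

import Mathlib

open Finset

/-- Monomial `u^v = ∏ i, u i ^ v i` (with the convention `0^0 = 1`). -/
noncomputable def monPow {d : ℕ} (u : Fin d → ℝ) (v : Fin d → ℕ) : ℝ :=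
  ∏ i, u i ^ v i

/-- The reaction vector `ζ = y' - y`, viewed as a real vector. -/
def zetaVec {d : ℕ} (y y' : Fin d → ℕ) : Fin d → ℝ :=
  fun i => (y' i : ℝ) - (y i : ℝ)

/-- Stochastic mass action intensity `λ_k(x) = κ_k ∏_i x_i!/(x_i - y_{ki})!`,
taken to be `0` when `x` is not componentwise at least `y_k`. -/
noncomputable def intensity {d : ℕ} (κk : ℝ) (yk : Fin d → ℕ) (x : Fin d → ℕ) : ℝ :=
  κk * ∏ i, ((x i).descFactorial (yk i) : ℝ)

/-- Right-hand side of the deterministic mass-action ODE: `Σ_k κ_k c^{y_k} ζ_k`. -/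
noncomputable def massActionRHS {d K : ℕ} (κ : Fin K → ℝ) (y y' : Fin K → Fin d → ℕ)
    (c : Fin d → ℝ) : Fin d → ℝ :=
  ∑ k, (κ k * monPow c (y k)) • zetaVec (y k) (y' k)

/-- `c` is differentiable on `[0,∞)` and solves the mass-action ODE there. -/
def solvesMassAction {d K : ℕ} (κ : Fin K → ℝ) (y y' : Fin K → Fin d → ℕ)
    (c : ℝ → Fin d → ℝ) : Prop :=
  ∀ t ≥ (0:ℝ), HasDerivWithinAt c (massActionRHS κ y y' (c t)) (Set.Ici 0) t

/-- The dynamical and restricted (DR) complex balance condition: for every complex `z`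
with `‖z‖₁ ≥ 2` and every `t ≥ 0`,
`Σ_{k : y_k = z} κ_k c(t)^z = Σ_{k : y'_k = z} κ_k c(t)^{y_k}`. -/
def DRcondition {d K : ℕ} (κ : Fin K → ℝ) (y y' : Fin K → Fin d → ℕ)
    (c : ℝ → Fin d → ℝ) : Prop :=
  ∀ z : Fin d → ℕ, 2 ≤ ∑ i, z i → ∀ t ≥ (0:ℝ),
    ∑ k ∈ univ.filter (fun k => y k = z), κ k * monPow (c t) z
      = ∑ k ∈ univ.filter (fun k => y' k = z), κ k * monPow (c t) (y k)

/-- `P` solves the chemical master equation on `[0,∞)`: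
`∂ₜ P(x,t) = Σ_k λ_k(x-ζ_k) P(x-ζ_k,t) 1{x-ζ_k ≥ 0} - Σ_k λ_k(x) P(x,t)`. -/
def solvesCME {d K : ℕ} (κ : Fin K → ℝ) (y y' : Fin K → Fin d → ℕ)
    (P : (Fin d → ℕ) → ℝ → ℝ) : Prop :=
  ∀ x : Fin d → ℕ, ∀ t ≥ (0:ℝ),
    HasDerivWithinAt (P x)
      ((∑ k, if ∀ i, y' k i ≤ x i + y k i then
          intensity (κ k) (y k) (fun i => x i + y k i - y' k i)
            * P (fun i => x i + y k i - y' k i) t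
        else 0)
       - ∑ k, intensity (κ k) (y k) x * P x t)
      (Set.Ici 0) t

/-- The product-Poisson probability mass function `∏_i e^{-c_i} c_i^{x_i}/x_i!`. -/
noncomputable def productPoisson {d : ℕ} (c : Fin d → ℝ) (x : Fin d → ℕ) : ℝ :=
  ∏ i, Real.exp (-(c i)) * (c i) ^ (x i) / (x i).factorial

namespace CMEProp31

noncomputable def descProd {d : ℕ} (x v : Fin d → ℕ) : ℝ :=
  ∏ i, ((x i).descFactorial (v i) : ℝ)

lemma alt_sum (N : ℕ) :
    ∑ j ∈ Finset.range (N + 1), ((-1 : ℝ)) ^ (N - j) * (N.choose j : ℝ)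
      = if N = 0 then 1 else 0 := by
  have key : ∀ j ∈ Finset.range (N + 1),
      ((-1 : ℝ)) ^ (N - j) * (N.choose j : ℝ)
        = (-1) ^ N * ((-1) ^ j * (N.choose j : ℝ)) := by
    intro j hj
    rw [Finset.mem_range] at hj
    have hle : j ≤ N := by omega
    have h1 : ((-1 : ℝ)) ^ N = (-1) ^ (N - j) * (-1) ^ j := by
      rw [← pow_add, Nat.sub_add_cancel hle]
    have h2 : ((-1 : ℝ)) ^ j * (-1) ^ j = 1 := by
      rw [← mul_pow]; norm_num
    calc ((-1 : ℝ)) ^ (N - j) * (N.choose j : ℝ)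
        = ((-1 : ℝ)) ^ (N - j) * ((-1) ^ j * (-1) ^ j) * (N.choose j : ℝ) := by rw [h2]; ring
      _ = (-1) ^ N * ((-1) ^ j * (N.choose j : ℝ)) := by rw [h1]; ring
  rw [Finset.sum_congr rfl key, ← Finset.mul_sum]
  have h := Int.alternating_sum_range_choose (n := N)
  have h' : (∑ j ∈ Finset.range (N + 1), ((-1 : ℝ)) ^ j * (N.choose j : ℝ))
      = if N = 0 then 1 else 0 := by
    have := congrArg (fun z : ℤ => (z : ℝ)) h
    push_cast at this
    simpa using this
  rw [h']
  rcases eq_or_ne N 0 with rfl | hN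
  · simp
  · simp [hN]

lemma one_dim_orth (n m : ℕ) :
    ∑ w ∈ Finset.range (n + 1),
        ((-1 : ℝ)) ^ (n - w) * (n.choose w : ℝ) * ((w.descFactorial m : ℕ) : ℝ)
      = (n.factorial : ℝ) * (if n = m then 1 else 0) := by
  rcases lt_or_ge n m with hnm | hmn
  · rw [if_neg (by omega), mul_zero]
    refine Finset.sum_eq_zero fun w hw => ?_
    rw [Finset.mem_range] at hw
    rw [Nat.descFactorial_eq_zero_iff_lt.mpr (by omega)]
    simp
  · rw [Finset.range_eq_Ico,
      ← Finset.sum_Ico_consecutive _ (Nat.zero_le m) (by omega : m ≤ n + 1)]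
    have hz : (∑ w ∈ Finset.Ico 0 m,
        ((-1 : ℝ)) ^ (n - w) * (n.choose w : ℝ) * ((w.descFactorial m : ℕ) : ℝ)) = 0 := by
      refine Finset.sum_eq_zero fun w hw => ?_
      rw [Finset.mem_Ico] at hw
      rw [Nat.descFactorial_eq_zero_iff_lt.mpr (by omega)]
      simp
    rw [hz, zero_add, Finset.sum_Ico_eq_sum_range]
    rw [show n + 1 - m = (n - m) + 1 from by omega]
    have hterm : ∀ j ∈ Finset.range ((n - m) + 1),
        ((-1 : ℝ)) ^ (n - (m + j)) * (n.choose (m + j) : ℝ) * (((m + j).descFactorial m : ℕ) : ℝ)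
          = (m.factorial : ℝ) * (n.choose m : ℝ)
            * (((-1 : ℝ)) ^ ((n - m) - j) * ((n - m).choose j : ℝ)) := by
      intro j hj
      rw [Finset.mem_range] at hj
      have hchoose : n.choose (m + j) * (m + j).choose m = n.choose m * (n - m).choose j := by
        have := Nat.choose_mul (n := n) (k := m + j) (s := m) (by omega)
        simpa [Nat.add_sub_cancel_left] using this
      have hdesc : (m + j).descFactorial m = m.factorial * (m + j).choose m :=
        Nat.descFactorial_eq_factorial_mul_choose _ _
      have hexp : n - (m + j) = (n - m) - j := by omega
      rw [hexp, hdesc]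
      have hc : ((n.choose (m + j) : ℝ)) * (((m + j).choose m : ℕ) : ℝ)
          = (n.choose m : ℝ) * ((n - m).choose j : ℝ) := by exact_mod_cast congrArg Nat.cast hchoose
      push_cast
      linear_combination ((-1 : ℝ)) ^ ((n - m) - j) * (m.factorial : ℝ) * hc
    rw [Finset.sum_congr rfl hterm, ← Finset.mul_sum, alt_sum]
    rcases eq_or_ne n m with rfl | hne
    · simp
    · rw [if_neg (by omega), if_neg hne]
      simp

noncomputable def Tz {d : ℕ} (z : Fin d → ℕ) (f : (Fin d → ℕ) → ℝ) : ℝ :=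
  ∑ w ∈ Fintype.piFinset fun i => Finset.range (z i + 1),
    (∏ i, ((-1 : ℝ)) ^ (z i - w i) * ((z i).choose (w i) : ℝ)) * f w

lemma Tz_descProd {d : ℕ} (z v : Fin d → ℕ) :
    Tz z (fun x => descProd x v)
      = (∏ i, ((z i).factorial : ℝ)) * (if z = v then 1 else 0) := by
  classical
  unfold Tz descProd
  have h1 : ∀ w ∈ Fintype.piFinset fun i => Finset.range (z i + 1),
      (∏ i, ((-1 : ℝ)) ^ (z i - w i) * ((z i).choose (w i) : ℝ))
          * ∏ i, (((w i).descFactorial (v i) : ℕ) : ℝ)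
        = ∏ i, ((-1 : ℝ)) ^ (z i - w i) * ((z i).choose (w i) : ℝ)
            * (((w i).descFactorial (v i) : ℕ) : ℝ) := by
    intro w _
    rw [← Finset.prod_mul_distrib]
  rw [Finset.sum_congr rfl h1,
    ← Finset.prod_univ_sum (fun i => Finset.range (z i + 1))
      (fun i j => ((-1 : ℝ)) ^ (z i - j) * ((z i).choose j : ℝ) * ((j.descFactorial (v i) : ℕ) : ℝ))]
  rw [Finset.prod_congr rfl fun i _ => one_dim_orth (z i) (v i), Finset.prod_mul_distrib,
    Fintype.prod_boole]
  by_cases h : z = v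
  · subst h; simp
  · rw [if_neg h, if_neg (fun h' => h (funext h'))]

lemma Tz_sub {d : ℕ} (z : Fin d → ℕ) (f g : (Fin d → ℕ) → ℝ) :
    Tz z (fun x => f x - g x) = Tz z f - Tz z g := by
  unfold Tz
  rw [← Finset.sum_sub_distrib]
  exact Finset.sum_congr rfl fun w _ => by ring

lemma Tz_const_mul {d : ℕ} (z : Fin d → ℕ) (a : ℝ) (f : (Fin d → ℕ) → ℝ) :
    Tz z (fun x => a * f x) = a * Tz z f := by
  unfold Tz
  rw [Finset.mul_sum]
  exact Finset.sum_congr rfl fun w _ => by ring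

lemma Tz_sum {d : ℕ} (z : Fin d → ℕ) {α : Type*} (s : Finset α) (F : α → (Fin d → ℕ) → ℝ) :
    Tz z (fun x => ∑ a ∈ s, F a x) = ∑ a ∈ s, Tz z (F a) := by
  unfold Tz
  simp only [Finset.mul_sum]
  rw [Finset.sum_comm]

lemma descProd_zero {d : ℕ} (x : Fin d → ℕ) : descProd x 0 = 1 := by
  unfold descProd; simp

lemma descProd_single {d : ℕ} (x : Fin d → ℕ) (m : Fin d) :
    descProd x (Pi.single m 1) = (x m : ℝ) := by
  unfold descProd
  have h : ∀ i : Fin d, (((x i).descFactorial ((Pi.single m 1 : Fin d → ℕ) i) : ℕ) : ℝ)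
      = if i = m then (x i : ℝ) else 1 := by
    intro i
    rcases eq_or_ne i m with rfl | h
    · simp
    · simp [Pi.single_eq_of_ne h, h]
  rw [Finset.prod_congr rfl fun i _ => h i, Finset.prod_ite_eq' Finset.univ m fun i => (x i : ℝ)]
  simp


lemma monPow_single {d : ℕ} (u : Fin d → ℝ) (m : Fin d) :
    monPow u (Pi.single m 1) = u m := by
  unfold monPow
  have h : ∀ i : Fin d, u i ^ ((Pi.single m 1 : Fin d → ℕ) i)
      = if i = m then u i else 1 := by
    intro i
    rcases eq_or_ne i m with rfl | h
    · simp
    · simp [Pi.single_eq_of_ne h, h]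
  rw [Finset.prod_congr rfl fun i _ => h i, Finset.prod_ite_eq' Finset.univ m fun i => u i]
  simp

lemma extraction {d K : ℕ} (c : Fin d → ℝ) (hc : ∀ i, 0 < c i)
    (κ r : Fin K → ℝ) (y y' : Fin K → Fin d → ℕ) (δ : Fin d → ℝ) (j : Fin d)
    (hident : ∀ x : Fin d → ℕ,
      (∑ m, (δ m / c m) * descProd x (Pi.single m 1)) - (∑ m, δ m) * descProd x 0
        = (∑ k, r k * descProd x (y' k)) - ∑ k, κ k * descProd x (y k))
    (hr : ∀ k, r k * monPow c (y' k) = κ k * monPow c (y k)) :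
    δ j = ∑ k, κ k * monPow c (y k) * ((y' k j : ℝ) - (y k j : ℝ)) := by
  classical
  set Z : Finset (Fin d → ℕ) :=
    insert (Pi.single j 1) ((Finset.univ.image y) ∪ (Finset.univ.image y')) with hZ
  set a : (Fin d → ℕ) → ℝ :=
    fun z => (z j : ℝ) * monPow c z / ∏ i, ((z i).factorial : ℝ) with ha
  have key : ∀ v : Fin d → ℕ,
      (∑ z ∈ Z, a z * Tz z (fun x => descProd x v))
        = if v ∈ Z then (v j : ℝ) * monPow c v else 0 := by
    intro v
    have h1 : ∀ z ∈ Z, a z * Tz z (fun x => descProd x v)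
        = if z = v then (z j : ℝ) * monPow c z else 0 := by
      intro z _
      rw [Tz_descProd]
      rcases eq_or_ne z v with rfl | h
      · rw [if_pos rfl, if_pos rfl, ha]
        have hf : (∏ i, ((z i).factorial : ℝ)) ≠ 0 :=
          ne_of_gt (Finset.prod_pos fun i _ => by exact_mod_cast (z i).factorial_pos)
        field_simp
      · rw [if_neg h, if_neg h, mul_zero, mul_zero]
    rw [Finset.sum_congr rfl h1, Finset.sum_ite_eq' Z v fun z => (z j : ℝ) * monPow c z]
  -- rewrite the functional applied to both sides of the identity
  have happ : (∑ z ∈ Z, a z * Tz z (fun x =>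
        (∑ m, (δ m / c m) * descProd x (Pi.single m 1)) - (∑ m, δ m) * descProd x 0))
      = ∑ z ∈ Z, a z * Tz z (fun x =>
        (∑ k, r k * descProd x (y' k)) - ∑ k, κ k * descProd x (y k)) := by
    refine Finset.sum_congr rfl fun z _ => ?_
    congr 1
    exact congrArg (Tz z) (funext hident)
  -- compute left side
  have hjZ : Pi.single j 1 ∈ Z := Finset.mem_insert_self _ _
  have hyZ : ∀ k, y k ∈ Z := fun k =>
    Finset.mem_insert_of_mem (Finset.mem_union_left _ (Finset.mem_image_of_mem y (Finset.mem_univ k)))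
  have hy'Z : ∀ k, y' k ∈ Z := fun k =>
    Finset.mem_insert_of_mem (Finset.mem_union_right _ (Finset.mem_image_of_mem y' (Finset.mem_univ k)))
  have hL : (∑ z ∈ Z, a z * Tz z (fun x =>
        (∑ m, (δ m / c m) * descProd x (Pi.single m 1)) - (∑ m, δ m) * descProd x 0))
      = δ j := by
    have e1 : ∀ z : Fin d → ℕ, Tz z (fun x =>
        (∑ m, (δ m / c m) * descProd x (Pi.single m 1)) - (∑ m, δ m) * descProd x 0)
        = (∑ m, (δ m / c m) * Tz z (fun x => descProd x (Pi.single m 1)))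
          - (∑ m, δ m) * Tz z (fun x => descProd x 0) := by
      intro z
      rw [Tz_sub, Tz_sum, Tz_const_mul]
      congr 1
      exact Finset.sum_congr rfl fun m _ => Tz_const_mul z _ _
    calc (∑ z ∈ Z, a z * Tz z (fun x =>
        (∑ m, (δ m / c m) * descProd x (Pi.single m 1)) - (∑ m, δ m) * descProd x 0))
        = (∑ m, (δ m / c m) * ∑ z ∈ Z, a z * Tz z (fun x => descProd x (Pi.single m 1)))
          - (∑ m, δ m) * ∑ z ∈ Z, a z * Tz z (fun x => descProd x 0) := by
          rw [Finset.sum_congr rfl fun z _ => by rw [e1 z]]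
          simp only [mul_sub, Finset.mul_sum]
          rw [Finset.sum_sub_distrib, Finset.sum_comm]
          congr 1
          · exact Finset.sum_congr rfl fun m _ => Finset.sum_congr rfl fun z _ => by ring
          · exact Finset.sum_congr rfl fun z _ => by ring
      _ = δ j := by
          rw [key 0]
          have h0 : (if (0 : Fin d → ℕ) ∈ Z then (((0 : Fin d → ℕ) j : ℕ) : ℝ) * monPow c 0 else 0)
              = 0 := by
            split <;> simp
          rw [h0, mul_zero, sub_zero]
          have hm : ∀ m : Fin d, (δ m / c m) * (∑ z ∈ Z, a z * Tz z (fun x => descProd x (Pi.single m 1)))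
              = if m = j then δ j else 0 := by
            intro m
            rw [key (Pi.single m 1)]
            rcases eq_or_ne m j with rfl | hmj
            · rw [if_pos hjZ, if_pos rfl]
              rw [monPow_single]
              have : ((Pi.single m 1 : Fin d → ℕ) m : ℝ) = 1 := by simp
              rw [this, one_mul]
              exact div_mul_cancel₀ _ (ne_of_gt (hc m))
            · rw [if_neg hmj]
              have : ((Pi.single m 1 : Fin d → ℕ) j : ℝ) = 0 := by
                simp [Pi.single_eq_of_ne (Ne.symm hmj)]
              split <;> simp [this]
          rw [Finset.sum_congr rfl fun m _ => hm m]
          simp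
  -- compute right side
  have hR : (∑ z ∈ Z, a z * Tz z (fun x =>
        (∑ k, r k * descProd x (y' k)) - ∑ k, κ k * descProd x (y k)))
      = ∑ k, κ k * monPow c (y k) * ((y' k j : ℝ) - (y k j : ℝ)) := by
    have e1 : ∀ z : Fin d → ℕ, Tz z (fun x =>
        (∑ k, r k * descProd x (y' k)) - ∑ k, κ k * descProd x (y k))
        = (∑ k, r k * Tz z (fun x => descProd x (y' k)))
          - ∑ k, κ k * Tz z (fun x => descProd x (y k)) := by
      intro z
      rw [Tz_sub, Tz_sum, Tz_sum]
      congr 1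
      · exact Finset.sum_congr rfl fun k _ => Tz_const_mul z _ _
      · exact Finset.sum_congr rfl fun k _ => Tz_const_mul z _ _
    calc (∑ z ∈ Z, a z * Tz z (fun x =>
        (∑ k, r k * descProd x (y' k)) - ∑ k, κ k * descProd x (y k)))
        = (∑ k, r k * ∑ z ∈ Z, a z * Tz z (fun x => descProd x (y' k)))
          - ∑ k, κ k * ∑ z ∈ Z, a z * Tz z (fun x => descProd x (y k)) := by
          rw [Finset.sum_congr rfl fun z _ => by rw [e1 z]]
          simp only [mul_sub, Finset.mul_sum]
          rw [Finset.sum_sub_distrib, Finset.sum_comm]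
          congr 1
          · exact Finset.sum_congr rfl fun k _ => Finset.sum_congr rfl fun z _ => by ring
          · rw [Finset.sum_comm]
            exact Finset.sum_congr rfl fun k _ => Finset.sum_congr rfl fun z _ => by ring
      _ = ∑ k, κ k * monPow c (y k) * ((y' k j : ℝ) - (y k j : ℝ)) := by
          have A : ∀ k : Fin K, (∑ z ∈ Z, a z * Tz z fun x => descProd x (y' k))
              = (y' k j : ℝ) * monPow c (y' k) := fun k => by rw [key (y' k), if_pos (hy'Z k)]
          have B : ∀ k : Fin K, (∑ z ∈ Z, a z * Tz z fun x => descProd x (y k))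
              = (y k j : ℝ) * monPow c (y k) := fun k => by rw [key (y k), if_pos (hyZ k)]
          simp only [A, B]
          rw [← Finset.sum_sub_distrib]
          refine Finset.sum_congr rfl fun k _ => ?_
          linear_combination ((y' k j : ℝ)) * hr k
  rw [← hL, happ, hR]


lemma poisson_factor {a : ℝ} (ha : 0 < a) (X Y Y' : ℕ) (h : Y' ≤ X) :
    (((X + Y - Y').descFactorial Y : ℕ) : ℝ)
        * (Real.exp (-a) * a ^ (X + Y - Y') / (X + Y - Y').factorial)
      = a ^ Y * a⁻¹ ^ Y' * (((X.descFactorial Y' : ℕ)) : ℝ)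
        * (Real.exp (-a) * a ^ X / (X.factorial)) := by
  obtain ⟨B, rfl⟩ : ∃ B, X = B + Y' := ⟨X - Y', by omega⟩
  rw [show B + Y' + Y - Y' = B + Y from by omega]
  have hBne : ((B.factorial : ℝ)) ≠ 0 := by exact_mod_cast B.factorial_ne_zero
  have d1 : (((B + Y).descFactorial Y : ℕ) : ℝ) = (B + Y).factorial / B.factorial := by
    rw [eq_div_iff hBne]
    have h2 := Nat.factorial_mul_descFactorial (show Y ≤ B + Y from by omega)
    rw [show B + Y - Y = B from by omega] at h2
    exact_mod_cast congrArg (fun n : ℕ => (n : ℝ)) ((Nat.mul_comm _ _).trans h2)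
  have d2 : (((B + Y').descFactorial Y' : ℕ) : ℝ) = (B + Y').factorial / B.factorial := by
    rw [eq_div_iff hBne]
    have h2 := Nat.factorial_mul_descFactorial (show Y' ≤ B + Y' from by omega)
    rw [show B + Y' - Y' = B from by omega] at h2
    exact_mod_cast congrArg (fun n : ℕ => (n : ℝ)) ((Nat.mul_comm _ _).trans h2)
  rw [d1, d2, pow_add, pow_add, inv_pow]
  have h1 : (((B + Y).factorial : ℕ) : ℝ) ≠ 0 := by exact_mod_cast (B + Y).factorial_ne_zero
  have h2 : (((B + Y').factorial : ℕ) : ℝ) ≠ 0 := by exact_mod_cast (B + Y').factorial_ne_zero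
  have ha' : a ≠ 0 := ne_of_gt ha
  field_simp

lemma cme_term_eq {d : ℕ} (c : Fin d → ℝ) (hc : ∀ i, 0 < c i) (κk : ℝ) (yk y'k : Fin d → ℕ)
    (x : Fin d → ℕ) :
    (if ∀ i, y'k i ≤ x i + yk i then
        intensity κk yk (fun i => x i + yk i - y'k i)
          * productPoisson c (fun i => x i + yk i - y'k i)
      else 0)
      = (κk * monPow c yk * ∏ i, (c i)⁻¹ ^ (y'k i)) * descProd x y'k * productPoisson c x := by
  by_cases hcond : ∀ i, y'k i ≤ x i + yk i
  · rw [if_pos hcond]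
    by_cases h2 : ∀ i, y'k i ≤ x i
    · have lhs_eq : intensity κk yk (fun i => x i + yk i - y'k i)
          * productPoisson c (fun i => x i + yk i - y'k i)
          = κk * ∏ i, ((((x i + yk i - y'k i).descFactorial (yk i) : ℕ) : ℝ)
            * (Real.exp (-(c i)) * (c i) ^ (x i + yk i - y'k i) / (x i + yk i - y'k i).factorial)) := by
        unfold intensity productPoisson
        rw [Finset.prod_mul_distrib, mul_assoc]
      have rhs_eq : (κk * monPow c yk * ∏ i, (c i)⁻¹ ^ (y'k i)) * descProd x y'k * productPoisson c x
          = κk * ∏ i, ((c i) ^ (yk i) * ((c i)⁻¹ ^ (y'k i) * ((((x i).descFactorial (y'k i) : ℕ) : ℝ)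
            * (Real.exp (-(c i)) * (c i) ^ (x i) / (x i).factorial)))) := by
        unfold monPow descProd productPoisson
        simp only [Finset.prod_mul_distrib]
        ring
      rw [lhs_eq, rhs_eq]
      congr 1
      refine Finset.prod_congr rfl fun i _ => ?_
      linear_combination poisson_factor (hc i) (x i) (yk i) (y'k i) (h2 i)
    · push_neg at h2
      obtain ⟨i0, hi0⟩ := h2
      have hz1 : descProd x y'k = 0 := by
        unfold descProd
        refine Finset.prod_eq_zero (Finset.mem_univ i0) ?_
        exact_mod_cast congrArg (fun n : ℕ => (n : ℝ))
          (Nat.descFactorial_eq_zero_iff_lt.mpr hi0)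
      have hz2 : intensity κk yk (fun i => x i + yk i - y'k i) = 0 := by
        unfold intensity
        have : (((x i0 + yk i0 - y'k i0).descFactorial (yk i0) : ℕ) : ℝ) = 0 := by
          exact_mod_cast congrArg (fun n : ℕ => (n : ℝ))
            (Nat.descFactorial_eq_zero_iff_lt.mpr (by have := hcond i0; omega))
        rw [Finset.prod_eq_zero (Finset.mem_univ i0) this, mul_zero]
      rw [hz1, hz2, zero_mul, mul_zero, zero_mul]
  · rw [if_neg hcond]
    push_neg at hcond
    obtain ⟨i0, hi0⟩ := hcond
    have hz1 : descProd x y'k = 0 := by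
      unfold descProd
      refine Finset.prod_eq_zero (Finset.mem_univ i0) ?_
      exact_mod_cast congrArg (fun n : ℕ => (n : ℝ))
        (Nat.descFactorial_eq_zero_iff_lt.mpr (by omega))
    rw [hz1, mul_zero, zero_mul]

lemma productPoisson_pos {d : ℕ} {c : Fin d → ℝ} (hc : ∀ i, 0 < c i) (x : Fin d → ℕ) :
    0 < productPoisson c x := by
  unfold productPoisson
  refine Finset.prod_pos fun i _ => ?_
  have := hc i
  positivity

lemma productPoisson_zero' {d : ℕ} (u : Fin d → ℝ) :
    productPoisson u 0 = ∏ i, Real.exp (-(u i)) := by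
  unfold productPoisson
  simp

lemma productPoisson_single {d : ℕ} (u : Fin d → ℝ) (j : Fin d) :
    productPoisson u (Pi.single j 1) = (∏ i, Real.exp (-(u i))) * u j := by
  unfold productPoisson
  have h : ∀ i : Fin d, Real.exp (-(u i)) * (u i) ^ ((Pi.single j 1 : Fin d → ℕ) i)
        / ((Pi.single j 1 : Fin d → ℕ) i).factorial
      = Real.exp (-(u i)) * (if i = j then u i else 1) := by
    intro i
    rcases eq_or_ne i j with rfl | h
    · simp
    · simp [Pi.single_eq_of_ne h, h]
  rw [Finset.prod_congr rfl fun i _ => h i, Finset.prod_mul_distrib,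
    Finset.prod_ite_eq' Finset.univ j fun i => u i]
  simp

end CMEProp31

/-- Proposition 3.1: if a solution of the chemical master equation is a product of Poissons
with mean vector `c(t) > 0`, then `c` is differentiable and solves the deterministic
mass-action ODE with initial condition `c(0)`. -/
theorem productPoisson_solution_implies_massAction
    {d K : ℕ} (κ : Fin K → ℝ) (y y' : Fin K → Fin d → ℕ)
    (hκ : ∀ k, 0 ≤ κ k) (hyy' : ∀ k, y' k ≠ y k)
    (P : (Fin d → ℕ) → ℝ → ℝ) (c : ℝ → Fin d → ℝ)
    (hcpos : ∀ t ≥ (0:ℝ), ∀ i, 0 < c t i)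
    (hCME : solvesCME κ y y' P)
    (hPoisson : ∀ x : Fin d → ℕ, ∀ t ≥ (0:ℝ), P x t = productPoisson (c t) x) :
    solvesMassAction κ y y' c := by
  classical
  have main : ∀ t, ∀ (ht : t ∈ Set.Ici (0:ℝ)), ∀ j : Fin d,
      HasDerivWithinAt (fun s => c s j) ((massActionRHS κ y y' (c t)) j) (Set.Ici 0) t := by
    intro t ht j
    have hct : ∀ i, 0 < c t i := hcpos t ht
    -- derivative of the product-Poisson family from the CME
    have hQderiv : ∀ x : Fin d → ℕ,
        HasDerivWithinAt (fun s => productPoisson (c s) x)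
          ((∑ k, if ∀ i, y' k i ≤ x i + y k i then
              intensity (κ k) (y k) (fun i => x i + y k i - y' k i)
                * productPoisson (c t) (fun i => x i + y k i - y' k i)
            else 0)
           - ∑ k, intensity (κ k) (y k) x * productPoisson (c t) x) (Set.Ici 0) t := by
      intro x
      have h := hCME x t ht
      simp only [show ∀ z : Fin d → ℕ, P z t = productPoisson (c t) z from
        fun z => hPoisson z t ht] at h
      exact h.congr (fun s hs => (hPoisson x s hs).symm) ((hPoisson x t ht).symm)
    have hQpos : ∀ s ∈ Set.Ici (0:ℝ), ∀ x : Fin d → ℕ, 0 < productPoisson (c s) x :=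
      fun s hs x => CMEProp31.productPoisson_pos (hcpos s hs) x
    -- each coordinate of c is differentiable on [0,∞)
    have hcdiff : ∀ m : Fin d, DifferentiableWithinAt ℝ (fun s => c s m) (Set.Ici 0) t := by
      intro m
      have hdiv := (hQderiv (Pi.single m 1)).div (hQderiv 0) (ne_of_gt (hQpos t ht 0))
      have hfrac : ∀ s ∈ Set.Ici (0:ℝ),
          c s m = productPoisson (c s) (Pi.single m 1) / productPoisson (c s) 0 := by
        intro s hs
        rw [CMEProp31.productPoisson_single, CMEProp31.productPoisson_zero']
        have hne : (∏ i, Real.exp (-(c s i))) ≠ 0 :=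
          ne_of_gt (Finset.prod_pos fun i _ => Real.exp_pos _)
        rw [mul_comm, mul_div_assoc, div_self hne, mul_one]
      exact ((hdiv.congr (fun s hs => hfrac s hs) (hfrac t ht))).differentiableWithinAt
    set δ : Fin d → ℝ := fun m => derivWithin (fun s => c s m) (Set.Ici 0) t with hδdef
    have hcd : ∀ m, HasDerivWithinAt (fun s => c s m) (δ m) (Set.Ici 0) t :=
      fun m => (hcdiff m).hasDerivWithinAt
    -- chain rule for the product-Poisson family
    have hchain : ∀ x : Fin d → ℕ,
        HasDerivWithinAt (fun s => productPoisson (c s) x)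
          (productPoisson (c t) x * ((∑ i, (x i : ℝ) * δ i / c t i) - ∑ i, δ i))
          (Set.Ici 0) t := by
      intro x
      have hfac : ∀ i : Fin d,
          HasDerivWithinAt (fun s => Real.exp (-(c s i)) * (c s i) ^ (x i) / (x i).factorial)
            ((Real.exp (-(c t i)) * (c t i) ^ (x i) / (x i).factorial)
              * ((x i : ℝ) * δ i / c t i - δ i)) (Set.Ici 0) t := by
        intro i
        have h1 : HasDerivWithinAt (fun s => Real.exp (-(c s i)))
            (Real.exp (-(c t i)) * (-δ i)) (Set.Ici 0) t := (hcd i).neg.exp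
        have h2 : HasDerivWithinAt (fun s => (c s i) ^ (x i))
            ((x i : ℝ) * (c t i) ^ (x i - 1) * δ i) (Set.Ici 0) t := (hcd i).pow (x i)
        have h3 := (h1.mul h2).div_const ((x i).factorial : ℝ)
        refine h3.congr_deriv ?_
        symm
        have hci : c t i ≠ 0 := ne_of_gt (hct i)
        have hfi : ((x i).factorial : ℝ) ≠ 0 := by exact_mod_cast (x i).factorial_ne_zero
        rcases Nat.eq_zero_or_pos (x i) with h0 | hpos
        · rw [h0]
          simp
        · have hpow : (c t i) ^ (x i) = (c t i) ^ (x i - 1) * c t i := by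
            rw [← pow_succ, Nat.sub_add_cancel hpos]
          rw [hpow]
          field_simp
          ring
      have hprod := HasDerivWithinAt.finset_prod
        (u := Finset.univ)
        (f := fun (i : Fin d) (s : ℝ) => Real.exp (-(c s i)) * (c s i) ^ (x i) / (x i).factorial)
        (f' := fun i => (Real.exp (-(c t i)) * (c t i) ^ (x i) / (x i).factorial)
              * ((x i : ℝ) * δ i / c t i - δ i))
        (fun i _ => hfac i)
      have hv : ∀ i : Fin d,
          (∏ j ∈ Finset.univ.erase i,
              (Real.exp (-(c t j)) * (c t j) ^ (x j) / (x j).factorial))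
            • ((Real.exp (-(c t i)) * (c t i) ^ (x i) / (x i).factorial)
              * ((x i : ℝ) * δ i / c t i - δ i))
          = productPoisson (c t) x * ((x i : ℝ) * δ i / c t i - δ i) := by
        intro i
        rw [smul_eq_mul, ← mul_assoc, Finset.prod_erase_mul _ _ (Finset.mem_univ i)]
        rfl
      have hval : productPoisson (c t) x * ((∑ i, (x i : ℝ) * δ i / c t i) - ∑ i, δ i)
          = ∑ i, (∏ j ∈ Finset.univ.erase i,
              (Real.exp (-(c t j)) * (c t j) ^ (x j) / (x j).factorial))
            • ((Real.exp (-(c t i)) * (c t i) ^ (x i) / (x i).factorial)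
              * ((x i : ℝ) * δ i / c t i - δ i)) := by
        rw [Finset.sum_congr rfl fun i _ => hv i, ← Finset.mul_sum]
        congr 1
        exact (Finset.sum_sub_distrib _ _).symm
      rw [hval]
      rw [Finset.prod_fn] at hprod
      exact hprod
    -- uniqueness of the derivative
    have hUD : UniqueDiffWithinAt ℝ (Set.Ici (0:ℝ)) t := uniqueDiffOn_Ici 0 t ht
    have hmain : ∀ x : Fin d → ℕ,
        (∑ k, if ∀ i, y' k i ≤ x i + y k i then
            intensity (κ k) (y k) (fun i => x i + y k i - y' k i)
              * productPoisson (c t) (fun i => x i + y k i - y' k i)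
          else 0)
         - (∑ k, intensity (κ k) (y k) x * productPoisson (c t) x)
          = productPoisson (c t) x * ((∑ i, (x i : ℝ) * δ i / c t i) - ∑ i, δ i) := by
      intro x
      have e1 := (hQderiv x).derivWithin hUD
      have e2 := (hchain x).derivWithin hUD
      exact e1.symm.trans e2
    -- the combinatorial identity
    set r : Fin K → ℝ := fun k => κ k * monPow (c t) (y k) * ∏ i, (c t i)⁻¹ ^ (y' k i) with hrdef
    have hident : ∀ x : Fin d → ℕ,
        (∑ m, (δ m / c t m) * CMEProp31.descProd x (Pi.single m 1))
            - (∑ m, δ m) * CMEProp31.descProd x 0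
          = (∑ k, r k * CMEProp31.descProd x (y' k))
            - ∑ k, κ k * CMEProp31.descProd x (y k) := by
      intro x
      have h := hmain x
      rw [Finset.sum_congr rfl fun k _ =>
        CMEProp31.cme_term_eq (c t) hct (κ k) (y k) (y' k) x] at h
      have h2 : ∀ k : Fin K, intensity (κ k) (y k) x * productPoisson (c t) x
          = κ k * CMEProp31.descProd x (y k) * productPoisson (c t) x := by
        intro k
        unfold intensity CMEProp31.descProd
        ring
      rw [Finset.sum_congr rfl fun k _ => h2 k] at h
      have hQne : productPoisson (c t) x ≠ 0 := ne_of_gt (hQpos t ht x)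
      apply mul_right_cancel₀ hQne
      have hsum : (∑ m, (δ m / c t m) * CMEProp31.descProd x (Pi.single m 1))
          = ∑ i, (x i : ℝ) * δ i / c t i := by
        refine Finset.sum_congr rfl fun m _ => ?_
        rw [CMEProp31.descProd_single]
        ring
      calc ((∑ m, (δ m / c t m) * CMEProp31.descProd x (Pi.single m 1))
            - (∑ m, δ m) * CMEProp31.descProd x 0) * productPoisson (c t) x
          = productPoisson (c t) x * ((∑ i, (x i : ℝ) * δ i / c t i) - ∑ i, δ i) := by
            rw [hsum, CMEProp31.descProd_zero]
            ring
        _ = ((∑ k, r k * CMEProp31.descProd x (y' k))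
            - ∑ k, κ k * CMEProp31.descProd x (y k)) * productPoisson (c t) x := by
            rw [sub_mul, Finset.sum_mul, Finset.sum_mul]
            exact h.symm
    -- extraction of the mass-action right-hand side
    have hrk : ∀ k, r k * monPow (c t) (y' k) = κ k * monPow (c t) (y k) := by
      intro k
      have hone : (∏ i, (c t i)⁻¹ ^ (y' k i)) * monPow (c t) (y' k) = 1 := by
        unfold monPow
        rw [← Finset.prod_mul_distrib]
        refine Finset.prod_eq_one fun i _ => ?_
        rw [← mul_pow, inv_mul_cancel₀ (ne_of_gt (hct i)), one_pow]
      calc r k * monPow (c t) (y' k)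
          = κ k * monPow (c t) (y k)
            * ((∏ i, (c t i)⁻¹ ^ (y' k i)) * monPow (c t) (y' k)) := by rw [hrdef]; ring
        _ = κ k * monPow (c t) (y k) := by rw [hone, mul_one]
    have hδj : δ j = ∑ k, κ k * monPow (c t) (y k) * ((y' k j : ℝ) - (y k j : ℝ)) :=
      CMEProp31.extraction (c t) hct κ r y y' δ j hident hrk
    have hMA : (massActionRHS κ y y' (c t)) j
        = ∑ k, κ k * monPow (c t) (y k) * ((y' k j : ℝ) - (y k j : ℝ)) := by
      unfold massActionRHS zetaVec
      rw [Finset.sum_apply]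
      exact Finset.sum_congr rfl fun k _ => by simp [smul_eq_mul]
    rw [hMA, ← hδj]
    exact hcd j
  intro t ht
  exact hasDerivWithinAt_pi.mpr fun j => main t ht j
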